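/- arXiv:2410.16521 — 2 statements merged into one kernel-verified Lean document; each statement's English description precedes it below -/
import Mathlib

section
/- The Milnor diagonal and augmentation make the mod-2 dual Steenrod algebra a bialgebra: the maps ψ and ε satisfy coassociativity (ψ ⊗ id_A) ∘ ψ = (id_A ⊗ ψ) ∘ ψ as F2-algebra homomorphisms A → A ⊗[F2] A ⊗[F2] A, and counitality (ε ⊗ id_A) ∘ ψ = id_A = (id_A ⊗ ε) ∘ ψ (after the canonical identifications F2 ⊗[F2] A ≅ A ≅ A ⊗[F2] F2). -/
open scoped TensorProduct

noncomputable section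

abbrev F2 := ZMod 2

/-- The mod-2 dual Steenrod algebra as a polynomial algebra on ξ₁, ξ₂, …. -/
abbrev A := MvPolynomial {n : ℕ // 1 ≤ n} F2

/-- The generators ξₙ, with the convention ξ₀ = 1. -/
def xi : ℕ → A
  | 0 => 1
  | n + 1 => MvPolynomial.X ⟨n + 1, by omega⟩

/-- The Milnor diagonal ψ(ξₙ) = Σ_{i=0}^{n} ξ_{n−i}^{2^i} ⊗ ξᵢ. -/
def ψ : A →ₐ[F2] A ⊗[F2] A :=
  MvPolynomial.aeval fun v =>
    ∑ i ∈ Finset.range (v.1 + 1), ((xi (v.1 - i)) ^ (2 ^ i)) ⊗ₜ[F2] xi i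

/-- The augmentation ε(ξₙ) = 0 for n ≥ 1. -/
def ε : A →ₐ[F2] F2 := MvPolynomial.aeval fun _ => 0

lemma xi_val (v : {n : ℕ // 1 ≤ n}) : xi v.1 = MvPolynomial.X v := by
  obtain ⟨n, h⟩ := v
  match n, h with
  | n + 1, h => rfl

lemma psi_xi (m : ℕ) :
    ψ (xi m) = ∑ i ∈ Finset.range (m + 1), ((xi (m - i)) ^ (2 ^ i)) ⊗ₜ[F2] xi i := by
  cases m with
  | zero => simp [xi, Algebra.TensorProduct.one_def]
  | succ n =>
    rw [show xi (n+1) = MvPolynomial.X ⟨n+1, by omega⟩ from rfl, ψ, MvPolynomial.aeval_X]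

lemma eps_xi : ∀ m : ℕ, ε (xi m) = if m = 0 then 1 else 0
  | 0 => by simp [xi]
  | n + 1 => by simp [xi, ε]

lemma coassoc_aux (v : {n : ℕ // 1 ≤ n}) :
    (Algebra.TensorProduct.assoc F2 F2 F2 A A A).toAlgHom
      ((Algebra.TensorProduct.map ψ (AlgHom.id F2 A)) (ψ (MvPolynomial.X v)))
      = (Algebra.TensorProduct.map (AlgHom.id F2 A) ψ) (ψ (MvPolynomial.X v)) := by
  haveI : Nontrivial (A ⊗[F2] A) :=
    (Algebra.TensorProduct.lmul' F2 (S := A)).toRingHom.domain_nontrivial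
  haveI : CharP (A ⊗[F2] A) 2 := charP_of_injective_algebraMap' F2 (A := A ⊗[F2] A) 2
  set n := v.1 with hn
  rw [← xi_val v, psi_xi]
  rw [map_sum, map_sum, map_sum]
  simp only [Algebra.TensorProduct.map_tmul, AlgHom.coe_id, id_eq, map_pow, psi_xi]
  simp only [TensorProduct.tmul_sum, sum_pow_char_pow, Algebra.TensorProduct.tmul_pow,
    ← pow_mul, ← pow_add, TensorProduct.sum_tmul, map_sum, Algebra.TensorProduct.assoc_tmul]
  rw [Finset.sum_sigma', Finset.sum_sigma']
  refine Finset.sum_nbij' (fun p => ⟨p.1 + p.2, p.1⟩) (fun p => ⟨p.2, p.1 - p.2⟩) ?_ ?_ ?_ ?_ ?_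
  · rintro ⟨i, j⟩ hp
    simp only [Finset.mem_sigma, Finset.mem_range] at hp ⊢
    omega
  · rintro ⟨k, i⟩ hp
    simp only [Finset.mem_sigma, Finset.mem_range] at hp ⊢
    omega
  · rintro ⟨i, j⟩ hp; simp
  · rintro ⟨k, i⟩ hp
    simp only [Finset.mem_sigma, Finset.mem_range] at hp
    simp only [Sigma.mk.inj_iff, heq_eq_eq]
    exact ⟨by omega, trivial⟩
  · rintro ⟨i, j⟩ hp
    simp only [Finset.mem_sigma, Finset.mem_range] at hp
    have h1 : n - i - j = n - (i + j) := by omega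
    have h2 : j + i = i + j := by omega
    have h3 : i + j - i = j := by omega
    rw [h1, h2, h3]
    rfl

lemma counit_left_aux (v : {n : ℕ // 1 ≤ n}) :
    (Algebra.TensorProduct.lid F2 A).toAlgHom
      ((Algebra.TensorProduct.map ε (AlgHom.id F2 A)) (ψ (MvPolynomial.X v)))
      = MvPolynomial.X v := by
  rw [← xi_val v, psi_xi]
  rw [map_sum, map_sum]
  simp only [Algebra.TensorProduct.map_tmul, map_pow, eps_xi, AlgHom.coe_id, id_eq,
    Algebra.TensorProduct.lid_tmul]
  rw [Finset.sum_eq_single v.1]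
  · simp [xi_val]
  · intro i hi hne
    rw [if_neg (by simp at hi; omega)]
    simp
  · intro h; simp at h

lemma counit_right_aux (v : {n : ℕ // 1 ≤ n}) :
    (Algebra.TensorProduct.rid F2 F2 A).toAlgHom
      ((Algebra.TensorProduct.map (AlgHom.id F2 A) ε) (ψ (MvPolynomial.X v)))
      = MvPolynomial.X v := by
  rw [← xi_val v, psi_xi]
  rw [map_sum, map_sum]
  simp only [Algebra.TensorProduct.map_tmul, AlgHom.coe_id, id_eq, eps_xi,
    Algebra.TensorProduct.rid_tmul]
  rw [Finset.sum_eq_single 0]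
  · simp [xi_val]
  · intro i hi hne
    rw [if_neg hne]; simp
  · intro h; simp at h

/-- The Milnor diagonal and augmentation make the mod-2 dual Steenrod algebra a
bialgebra: ψ is coassociative and ε is a counit for ψ. -/
theorem steenrod_bialgebra :
    ((Algebra.TensorProduct.assoc F2 F2 F2 A A A).toAlgHom.comp
        ((Algebra.TensorProduct.map ψ (AlgHom.id F2 A)).comp ψ) =
      (Algebra.TensorProduct.map (AlgHom.id F2 A) ψ).comp ψ) ∧
    ((Algebra.TensorProduct.lid F2 A).toAlgHom.comp
        ((Algebra.TensorProduct.map ε (AlgHom.id F2 A)).comp ψ) = AlgHom.id F2 A) ∧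
    ((Algebra.TensorProduct.rid F2 F2 A).toAlgHom.comp
        ((Algebra.TensorProduct.map (AlgHom.id F2 A) ε).comp ψ) = AlgHom.id F2 A) := by
  refine ⟨?_, ?_, ?_⟩ <;> apply MvPolynomial.algHom_ext <;> intro v <;>
    simp only [AlgHom.comp_apply, AlgHom.coe_id, id_eq]
  · exact coassoc_aux v
  · exact counit_left_aux v
  · exact counit_right_aux v
end
end

section
/- The primitives of the comodule F2[q_0, q_1, …] are exactly the polynomials in q_0: an element x ∈ M satisfies ρ(x) = 1 ⊗ x if and only if x is an F2-linear combination of the powers q_0^k for k ≥ 0 (equivalently, x lies in the image of Polynomial F2 → M sending the polynomial variable to q_0). -/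
open scoped TensorProduct

noncomputable section

/-- The polynomial algebra F2[q₀, q₁, …]. -/
abbrev M := MvPolynomial ℕ F2

/-- The coaction ρ(qₙ) = Σ_{i=0}^{n} ξ_{n−i}^{2^{i+1}} ⊗ qᵢ. -/
def ρ : M →ₐ[F2] A ⊗[F2] M :=
  MvPolynomial.aeval fun n =>
    ∑ i ∈ Finset.range (n + 1), ((xi (n - i)) ^ (2 ^ (i + 1))) ⊗ₜ[F2] (MvPolynomial.X i : M)

namespace PrimAux

open MvPolynomial

/-- Substitution sending q_m ↦ q_{m+1}² q₀ and fixing the other variables. -/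
def hfun (m : ℕ) : ℕ → M := fun n => if n = m then (X (m+1))^2 * X 0 else X n

/-- Substitution sending q_m ↦ 0 and fixing the other variables. -/
def h0fun (m : ℕ) : ℕ → M := fun n => if n = m then 0 else X n

lemma algHom_congr_vars {N : Type*} [CommRing N] [Algebra F2 N] (F G : M →ₐ[F2] N) (x : M)
    (h : ∀ n ∈ x.vars, F (X n) = G (X n)) : F x = G x := by
  conv_lhs => rw [x.as_sum]
  conv_rhs => rw [x.as_sum]
  rw [map_sum, map_sum]
  refine Finset.sum_congr rfl fun d hd => ?_
  rw [monomial_eq, ← MvPolynomial.algebraMap_eq, map_mul, map_mul, F.commutes, G.commutes]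
  congr 1
  rw [map_finsuppProd, map_finsuppProd]
  refine Finsupp.prod_congr fun n hn => ?_
  rw [map_pow, map_pow, h n ((mem_vars n).2 ⟨d, hd, hn⟩)]

lemma aeval_hfun_monomial (m : ℕ) (d : ℕ →₀ ℕ) (c : F2) :
    aeval (hfun m) (monomial d c) =
      monomial (d.erase m + (Finsupp.single (m+1) (2 * d m) + Finsupp.single 0 (d m))) c := by
  rw [aeval_monomial]
  conv_lhs => rw [show d = d.erase m + Finsupp.single m (d m) from (Finsupp.erase_add_single m d).symm]
  rw [Finsupp.prod_add_index' (fun _ => pow_zero _) (fun a b1 b2 => pow_add _ _ _),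
      Finsupp.prod_single_index (h := fun n k => hfun m n ^ k) (pow_zero _)]
  have h1 : (d.erase m).prod (fun n k => hfun m n ^ k) = monomial (d.erase m) (1:F2) := by
    rw [monomial_eq, map_one, one_mul]
    refine Finsupp.prod_congr fun n hn => ?_
    have hnm : n ≠ m := by
      intro h; rw [Finsupp.mem_support_iff, h, Finsupp.erase_same] at hn; exact hn rfl
    simp [hfun, hnm]
  have h2 : hfun m m ^ (d m) = monomial (Finsupp.single (m+1) (2 * d m) + Finsupp.single 0 (d m)) (1:F2) := by
    have : hfun m m = (X (m+1))^2 * X 0 := by simp [hfun]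
    rw [this, mul_pow, ← pow_mul, X_pow_eq_monomial, X_pow_eq_monomial, monomial_mul, one_mul]
  rw [h1, h2, monomial_mul, one_mul, algebraMap_eq, C_mul_monomial, mul_one]

lemma aeval_h0fun_monomial (m : ℕ) (d : ℕ →₀ ℕ) (c : F2) :
    aeval (h0fun m) (monomial d c) = if d m = 0 then monomial d c else 0 := by
  rw [aeval_monomial]
  by_cases h : d m = 0
  · rw [if_pos h]
    have h1 : d.prod (fun n k => h0fun m n ^ k) = monomial d (1:F2) := by
      rw [monomial_eq, map_one, one_mul]
      refine Finsupp.prod_congr fun n hn => ?_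
      have hnm : n ≠ m := fun he => (Finsupp.mem_support_iff.1 hn) (he ▸ h)
      simp [h0fun, hnm]
    rw [h1, algebraMap_eq, C_mul_monomial, mul_one]
  · rw [if_neg h]
    have h1 : d.prod (fun n k => h0fun m n ^ k) = 0 := by
      rw [Finsupp.prod]
      apply Finset.prod_eq_zero (Finsupp.mem_support_iff.2 h)
      simp [h0fun, zero_pow h]
    rw [h1, mul_zero]

lemma key (x : M) (m : ℕ) (hsup : ∀ d ∈ x.support, d (m+1) = 0)
    (hx : aeval (hfun m) x = aeval (h0fun m) x) :
    ∀ d ∈ x.support, d m = 0 := by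
  intro d hd
  by_contra hdm
  have hm1m : (m+1) ≠ m := by omega
  set t := d.erase m + (Finsupp.single (m+1) (2 * d m) + Finsupp.single 0 (d m)) with ht
  have htm1 : t (m+1) = 2 * d m := by
    simp [ht, Finsupp.erase_ne hm1m, hsup d hd, Finsupp.single_apply]
  have hinj : ∀ d' ∈ x.support,
      (d'.erase m + (Finsupp.single (m+1) (2 * d' m) + Finsupp.single 0 (d' m))) = t → d' = d := by
    intro d' hd' hT
    have e1 : d' m = d m := by
      have h := congrArg (fun f : ℕ →₀ ℕ => f (m+1)) hT
      simp [ht, Finsupp.erase_ne hm1m, hsup d' hd', hsup d hd, Finsupp.single_apply] at h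
      omega
    rw [ht, e1] at hT
    have e2 : d'.erase m = d.erase m := add_right_cancel hT
    ext n
    by_cases hn : n = m
    · rw [hn]; exact e1
    · have h := congrArg (fun f : ℕ →₀ ℕ => f n) e2
      simpa [Finsupp.erase_ne hn] using h
  have h1 : coeff t (aeval (hfun m) x) = coeff d x := by
    conv_lhs => rw [x.as_sum, map_sum]
    rw [coeff_sum]
    have hterm : ∀ d' ∈ x.support,
        coeff t (aeval (hfun m) (monomial d' (coeff d' x))) =
          if (d'.erase m + (Finsupp.single (m+1) (2 * d' m) + Finsupp.single 0 (d' m))) = t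
          then coeff d' x else 0 := by
      intro d' _
      rw [aeval_hfun_monomial, coeff_monomial]
    rw [Finset.sum_congr rfl hterm, Finset.sum_eq_single_of_mem d hd]
    · rw [if_pos ht.symm]
    · intro d' hd' hne
      exact if_neg (fun hT => hne (hinj d' hd' hT))
  have h2 : coeff t (aeval (h0fun m) x) = 0 := by
    conv_lhs => rw [x.as_sum, map_sum]
    rw [coeff_sum]
    refine Finset.sum_eq_zero fun d' hd' => ?_
    rw [aeval_h0fun_monomial]
    by_cases h : d' m = 0
    · rw [if_pos h, coeff_monomial, if_neg]
      intro hT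
      have h' := congrArg (fun f : ℕ →₀ ℕ => f (m+1)) hT
      rw [hsup d' hd', htm1] at h'
      omega
    · rw [if_neg h, coeff_zero]
  exact MvPolynomial.mem_support_iff.1 hd (by rw [← h1, hx, h2])

lemma step (x : M) (m : ℕ) (hm : 1 ≤ m) (hrho : ρ x = (1:A) ⊗ₜ[F2] x)
    (hv : ∀ n ∈ x.vars, n ≤ m) :
    aeval (hfun m) x = aeval (h0fun m) x := by
  classical
  set π : A →ₐ[F2] M :=
    aeval (fun j : {n : ℕ // 1 ≤ n} => if (j : ℕ) = m then X (m+1) else 0) with hπ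
  set g : A ⊗[F2] M →ₐ[F2] M :=
    Algebra.TensorProduct.lift π (AlgHom.id F2 M) (fun _ _ => Commute.all _ _) with hg
  have hgx : g (ρ x) = x := by
    rw [hrho, Algebra.TensorProduct.lift_tmul, map_one, one_mul]; rfl
  set w : ℕ → M := fun k => aeval (h0fun m) (π (xi k)) with hwdef
  have hm1m : (m+1) ≠ m := by omega
  have hw0 : w 0 = 1 := by simp [hwdef, xi]
  have hwk : ∀ k, 1 ≤ k → w k = if k = m then X (m+1) else 0 := by
    intro k hk
    obtain ⟨k', rfl⟩ : ∃ k', k = k' + 1 := ⟨k - 1, by omega⟩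
    simp only [hwdef, xi, hπ, aeval_X]
    by_cases h : k' + 1 = m
    · rw [if_pos h, aeval_X]
      simp [h0fun, hm1m]
    · rw [if_neg h, map_zero]
  have main : ((aeval (h0fun m)).comp (g.comp ρ)) x = aeval (hfun m) x := by
    apply algHom_congr_vars
    intro n hn
    have hnm : n ≤ m := hv n hn
    have lhs_eq : ((aeval (h0fun m)).comp (g.comp ρ)) (X n) =
        ∑ i ∈ Finset.range (n + 1), (w (n - i)) ^ (2 ^ (i + 1)) * h0fun m i := by
      rw [AlgHom.comp_apply, AlgHom.comp_apply]
      rw [show ρ (X n : M) = ∑ i ∈ Finset.range (n + 1),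
        ((xi (n - i)) ^ (2 ^ (i + 1))) ⊗ₜ[F2] (X i : M) from by rw [ρ, aeval_X]]
      rw [map_sum, map_sum]
      refine Finset.sum_congr rfl fun i _ => ?_
      rw [hg, Algebra.TensorProduct.lift_tmul, map_pow, AlgHom.id_apply, map_mul, map_pow,
        aeval_X]
    rw [lhs_eq, aeval_X]
    rcases eq_or_lt_of_le hnm with heq | hlt
    · subst heq
      rw [Finset.sum_eq_single_of_mem 0 (Finset.mem_range.2 (by omega))]
      · rw [Nat.sub_zero, hwk n (by omega), if_pos rfl]
        have h0ne : (0:ℕ) ≠ n := by omega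
        simp only [h0fun, hfun, if_neg h0ne, if_pos rfl]
        norm_num
      · intro i hi hne
        rcases eq_or_ne i n with rfl | hine
        · rw [Nat.sub_self, hw0, one_pow, one_mul]
          simp [h0fun]
        · have hi' : i < n := by
            have := Finset.mem_range.1 hi; omega
          have h1 : 1 ≤ n - i := by omega
          have h2 : n - i ≠ n := by omega
          rw [hwk _ h1, if_neg h2, zero_pow (by positivity), zero_mul]
    · rw [Finset.sum_eq_single_of_mem n (Finset.mem_range.2 (by omega))]
      · rw [Nat.sub_self, hw0, one_pow, one_mul]
        simp [h0fun, hfun, hlt.ne]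
      · intro i hi hne
        have hi' : i < n := by
          have := Finset.mem_range.1 hi; omega
        have h1 : 1 ≤ n - i := by omega
        have h2 : n - i ≠ m := by omega
        rw [hwk _ h1, if_neg h2, zero_pow (by positivity), zero_mul]
  rw [AlgHom.comp_apply, AlgHom.comp_apply, hgx] at main
  exact main.symm

end PrimAux

open MvPolynomial in
/-- The primitives of the comodule F2[q₀, q₁, …] are exactly the polynomials in q₀:
ρ(x) = 1 ⊗ x iff x lies in the image of F2[T] → M sending T to q₀. -/
theorem primitives_eq_powers_of_q0 :
    ∀ x : M, ρ x = (1 : A) ⊗ₜ[F2] x ↔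
      x ∈ (Polynomial.aeval (MvPolynomial.X 0 : M) : Polynomial F2 →ₐ[F2] M).range := by
  intro x
  constructor
  · intro hrho
    have hvars : (x.vars : Set ℕ) ⊆ {0} := by
      by_contra hcon
      obtain ⟨n, hn, hn0⟩ := Set.not_subset.1 hcon
      have hn1 : 1 ≤ n := Nat.one_le_iff_ne_zero.2 (fun h => hn0 (by simp [h]))
      have hne : x.vars.Nonempty := ⟨n, by simpa using hn⟩
      set m := x.vars.max' hne with hmdef
      have hm1 : 1 ≤ m := le_trans hn1 (x.vars.le_max' n (by simpa using hn))
      have hv : ∀ k ∈ x.vars, k ≤ m := fun k hk => x.vars.le_max' k hk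
      have hsup : ∀ d ∈ x.support, d (m+1) = 0 := by
        intro d hd
        by_contra h
        have hmem : (m+1) ∈ x.vars := (mem_vars _).2 ⟨d, hd, Finsupp.mem_support_iff.2 h⟩
        have := hv _ hmem; omega
      have hkey := PrimAux.key x m hsup (PrimAux.step x m hm1 hrho hv)
      obtain ⟨d, hd, hds⟩ := (mem_vars m).1 (x.vars.max'_mem hne)
      exact Finsupp.mem_support_iff.1 hds (hkey d hd)
    have hx : x ∈ MvPolynomial.supported F2 ({0} : Set ℕ) := mem_supported.2 hvars
    have heq : MvPolynomial.supported F2 ({0} : Set ℕ) =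
        (Polynomial.aeval (MvPolynomial.X 0 : M) : Polynomial F2 →ₐ[F2] M).range := by
      rw [MvPolynomial.supported, Set.image_singleton, Algebra.adjoin_singleton_eq_range_aeval]
    rwa [heq] at hx
  · rintro ⟨p, rfl⟩
    simp only [AlgHom.toRingHom_eq_coe, RingHom.coe_coe]
    have h2 : ρ (MvPolynomial.X 0 : M) = (1:A) ⊗ₜ[F2] (MvPolynomial.X 0 : M) := by
      rw [ρ, aeval_X, Finset.sum_range_one]
      simp [xi]
    rw [← Polynomial.aeval_algHom_apply, h2, ← Algebra.TensorProduct.includeRight_apply,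
      Polynomial.aeval_algHom_apply, Algebra.TensorProduct.includeRight_apply]
end
end
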